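/- Let A_k and B_k be as defined from parameters a, b, and let F_{2k} = [[A_k, B_k],[(−1)^k·B_k, A_k]]. Then F_{2k} is skew-centrosymmetric: J·F_{2k}·J = −F_{2k}, where J is the 2k×2k exchange (anti-identity) matrix. -/

import Mathlib

/-- Let `A_k`, `B_k` be as in the paper and `F_{2k} = [[A_k, B_k], [(-1)^k B_k, A_k]]`.
Then `F_{2k}` is skew-centrosymmetric: `J * F * J = -F`, where `J` is the `2k × 2k`
exchange (anti-identity) matrix. -/
theorem stmt9 {R : Type*} [CommRing R] (a b : R) (k : ℕ)
    (A B : Matrix (Fin k) (Fin k) R)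
    (hA : ∀ p q : Fin k, A p q =
      if q.1 = p.1 + 1 then a else if p.1 = q.1 + 1 then -a else 0)
    (hB : ∀ p q : Fin k, B p q =
      if p.1 + q.1 + 1 = k then (-1 : R) ^ p.1 * b else 0)
    (J : Matrix (Fin k ⊕ Fin k) (Fin k ⊕ Fin k) R)
    (hJ : ∀ p q : Fin k ⊕ Fin k,
      J p q = if (finSumFinEquiv p).1 + (finSumFinEquiv q).1 + 1
          = 2 * k then 1 else 0) :
    J * (Matrix.fromBlocks A B (((-1 : R) ^ k) • B) A) * J =
      -(Matrix.fromBlocks A B (((-1 : R) ^ k) • B) A) := by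
  set E : Matrix (Fin k) (Fin k) R :=
    Matrix.of fun p q => if p.1 + q.1 + 1 = k then (1 : R) else 0 with hE
  -- J is the block anti-diagonal of two k×k exchange matrices
  have hJb : J = Matrix.fromBlocks 0 E E 0 := by
    ext p q
    rcases p with p | p <;> rcases q with q | q <;>
      simp only [hJ, hE, Matrix.fromBlocks_apply₁₁, Matrix.fromBlocks_apply₁₂,
        Matrix.fromBlocks_apply₂₁, Matrix.fromBlocks_apply₂₂, Matrix.of_apply,
        finSumFinEquiv_apply_left, finSumFinEquiv_apply_right,
        Fin.coe_castAdd, Fin.coe_natAdd, Matrix.zero_apply]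
    · exact if_neg (by have := p.isLt; have := q.isLt; omega)
    · exact if_congr (by omega) rfl rfl
    · exact if_congr (by omega) rfl rfl
    · exact if_neg (by have := p.isLt; have := q.isLt; omega)
  have keyL : ∀ (M : Matrix (Fin k) (Fin k) R) (p q : Fin k),
      (E * M) p q = M p.rev q := by
    intro M p q
    rw [Matrix.mul_apply, Finset.sum_eq_single p.rev]
    · rw [hE]
      simp only [Matrix.of_apply, Fin.val_rev]
      rw [if_pos (by have := p.isLt; omega), one_mul]
    · intro r _ hr
      rw [hE]
      simp only [Matrix.of_apply]
      rw [if_neg, zero_mul]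
      intro h
      exact hr (Fin.ext (by rw [Fin.val_rev]; have := p.isLt; omega))
    · simp
  have keyR : ∀ (M : Matrix (Fin k) (Fin k) R) (p q : Fin k),
      (M * E) p q = M p q.rev := by
    intro M p q
    rw [Matrix.mul_apply, Finset.sum_eq_single q.rev]
    · rw [hE]
      simp only [Matrix.of_apply, Fin.val_rev]
      rw [if_pos (by have := q.isLt; omega), mul_one]
    · intro r _ hr
      rw [hE]
      simp only [Matrix.of_apply]
      rw [if_neg, mul_zero]
      intro h
      exact hr (Fin.ext (by rw [Fin.val_rev]; have := q.isLt; omega))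
    · simp
  have key : ∀ (M : Matrix (Fin k) (Fin k) R) (p q : Fin k),
      (E * M * E) p q = M p.rev q.rev := by
    intro M p q
    rw [keyR, keyL]
  have hk1 : (-1 : R) ^ k * (-1) ^ k = 1 := by
    rw [← pow_add]
    exact Even.neg_one_pow ⟨k, by ring⟩
  have hpow : ∀ p : Fin k, (-1 : R) ^ (k - (p.1 + 1)) = (-1) ^ k * (-1) ^ (p.1 + 1) := by
    intro p
    have hsum : (-1 : R) ^ (k - (p.1 + 1)) * (-1) ^ (p.1 + 1) = (-1) ^ k := by
      rw [← pow_add]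
      congr 1
      have := p.isLt; omega
    have he : (-1 : R) ^ (p.1 + 1) * (-1) ^ (p.1 + 1) = 1 := by
      rw [← pow_add]
      exact Even.neg_one_pow ⟨p.1 + 1, by ring⟩
    calc (-1 : R) ^ (k - (p.1 + 1))
        = (-1) ^ (k - (p.1 + 1)) * ((-1) ^ (p.1 + 1) * (-1) ^ (p.1 + 1)) := by
          rw [he, mul_one]
      _ = ((-1) ^ (k - (p.1 + 1)) * (-1) ^ (p.1 + 1)) * (-1) ^ (p.1 + 1) := by ring
      _ = (-1) ^ k * (-1) ^ (p.1 + 1) := by rw [hsum]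
  have hTL : E * A * E = -A := by
    ext p q
    rw [key]
    simp only [hA, Matrix.neg_apply, Fin.val_rev]
    have hp := p.isLt; have hq := q.isLt
    split_ifs <;> first | ring1 | (exfalso; omega)
  have hTR : E * (((-1 : R) ^ k) • B) * E = -B := by
    ext p q
    rw [key]
    simp only [Matrix.smul_apply, hB, Matrix.neg_apply, Fin.val_rev, smul_eq_mul]
    have hp := p.isLt; have hq := q.isLt
    split_ifs with h1 h2 <;> first
      | ring1
      | (exfalso; omega)
      | (rw [hpow p]; linear_combination (b * (-1 : R) ^ (p.1 + 1)) * hk1)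
  have hBL : E * B * E = -(((-1 : R) ^ k) • B) := by
    ext p q
    rw [key]
    simp only [Matrix.smul_apply, hB, Matrix.neg_apply, Fin.val_rev, smul_eq_mul]
    have hp := p.isLt; have hq := q.isLt
    split_ifs with h1 h2 <;> first
      | ring1
      | (exfalso; omega)
      | (rw [hpow p]; ring)
  rw [hJb, Matrix.fromBlocks_multiply, Matrix.fromBlocks_multiply]
  simp only [Matrix.zero_mul, Matrix.mul_zero, zero_add, add_zero]
  rw [hTL, hTR, hBL, ← Matrix.fromBlocks_neg]
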